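/- Let M be a real symmetric m×m matrix with strictly positive entries such that the quadratic function q(v) := ⟨x+v, My⟩² − ⟨x+v, M(x+v)⟩·⟨y, My⟩ is nonnegative for all v in a neighborhood of 0, where x, y ∈ ℝ^m are linearly independent with strictly positive entries and q(0) = 0. Then the vector z := ⟨y, My⟩·x − ⟨x, My⟩·y is a nonzero element of the kernel of M, and in particular det(M) = 0. -/

import Mathlib

open Matrix

/-- If `q(v) = ⟨x+v, My⟩² − ⟨x+v, M(x+v)⟩·⟨y, My⟩` is nonnegative near `0` and
vanishes at `0`, with `x, y` linearly independent strictly positive vectors, then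
`z = ⟨y, My⟩·x − ⟨x, My⟩·y` is a nonzero kernel vector of `M`, so `det M = 0`. -/
theorem stmt_8 (m : ℕ) (M : Matrix (Fin m) (Fin m) ℝ) (hM : M.IsHermitian)
    (hpos : ∀ i j, 0 < M i j) (x y : Fin m → ℝ)
    (hx : ∀ i, 0 < x i) (hy : ∀ i, 0 < y i)
    (hli : LinearIndependent ℝ ![x, y])
    (hq0 : ((x ⬝ᵥ M.mulVec y) ^ 2 - (x ⬝ᵥ M.mulVec x) * (y ⬝ᵥ M.mulVec y)) = 0)
    (hq : ∀ᶠ v in nhds (0 : Fin m → ℝ),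
      0 ≤ ((x + v) ⬝ᵥ M.mulVec y) ^ 2 - ((x + v) ⬝ᵥ M.mulVec (x + v)) * (y ⬝ᵥ M.mulVec y)) :
    (y ⬝ᵥ M.mulVec y) • x - (x ⬝ᵥ M.mulVec y) • y ≠ 0 ∧
      M.mulVec ((y ⬝ᵥ M.mulVec y) • x - (x ⬝ᵥ M.mulVec y) • y) = 0 ∧
      M.det = 0 := by
  have hMsym : Mᵀ = M := by
    simpa [Matrix.IsHermitian, Matrix.conjTranspose_eq_transpose_of_trivial] using hM
  have hsym : ∀ u v : Fin m → ℝ, u ⬝ᵥ M.mulVec v = v ⬝ᵥ M.mulVec u := by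
    intro u v
    rw [Matrix.dotProduct_mulVec, dotProduct_comm, ← Matrix.mulVec_transpose, hMsym]
  set a := x ⬝ᵥ M.mulVec y with ha
  set β := y ⬝ᵥ M.mulVec y with hβ
  -- x ≠ 0, nonempty
  have hx0 : x ≠ 0 := by
    have := hli.ne_zero 0
    simpa using this
  have hne : Nonempty (Fin m) := by
    by_contra h
    exact hx0 (funext fun i => absurd ⟨i⟩ h)
  have hβpos : 0 < β := by
    rw [hβ, dotProduct]
    apply Finset.sum_pos _ Finset.univ_nonempty
    intro i _
    apply mul_pos (hy i)
    rw [Matrix.mulVec, dotProduct]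
    exact Finset.sum_pos (fun j _ => mul_pos (hpos i j) (hy j)) Finset.univ_nonempty
  -- key: for all w, the linear coefficient vanishes
  have key : ∀ w : Fin m → ℝ, β * (w ⬝ᵥ M.mulVec x) = a * (w ⬝ᵥ M.mulVec y) := by
    intro w
    set b := w ⬝ᵥ M.mulVec y with hb
    set d := w ⬝ᵥ M.mulVec x with hd
    set c := x ⬝ᵥ M.mulVec x with hc
    set e := w ⬝ᵥ M.mulVec w with he
    have hexp : ∀ t : ℝ, ((x + t • w) ⬝ᵥ M.mulVec y) ^ 2
        - ((x + t • w) ⬝ᵥ M.mulVec (x + t • w)) * β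
        = (2*a*b - 2*d*β) * t + (b^2 - e*β) * t^2 := by
      intro t
      have h1 : (x + t • w) ⬝ᵥ M.mulVec y = a + t * b := by
        simp [add_dotProduct, smul_dotProduct, ha, hb, smul_eq_mul]
      have h2 : (x + t • w) ⬝ᵥ M.mulVec (x + t • w) = c + 2 * t * d + t ^ 2 * e := by
        simp only [Matrix.mulVec_add, Matrix.mulVec_smul, add_dotProduct,
          dotProduct_add, smul_dotProduct, dotProduct_smul,
          smul_eq_mul]
        have hxy : x ⬝ᵥ M.mulVec w = d := (hsym x w).trans rfl
        rw [hxy, ← hc, ← hd, ← he]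
        ring_nf
      rw [h1, h2]
      have h0 : a ^ 2 - c * β = 0 := hq0
      nlinarith [h0]
    -- local min argument
    have htend : Filter.Tendsto (fun t : ℝ => t • w) (nhds 0) (nhds 0) := by
      have : Filter.Tendsto (fun t : ℝ => t • w) (nhds 0) (nhds ((0:ℝ) • w)) :=
        (continuous_id.smul continuous_const).tendsto 0
      simpa using this
    have hev : ∀ᶠ t : ℝ in nhds 0, 0 ≤ (2*a*b - 2*d*β) * t + (b^2 - e*β) * t^2 := by
      filter_upwards [htend.eventually hq] with t ht
      rw [← hexp t]
      exact ht
    have hmin : IsLocalMin (fun t : ℝ => (2*a*b - 2*d*β) * t + (b^2 - e*β) * t^2) 0 := by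
      have : (fun t : ℝ => (2*a*b - 2*d*β) * t + (b^2 - e*β) * t^2) 0 = 0 := by ring
      unfold IsLocalMin IsMinFilter
      filter_upwards [hev] with t ht
      simpa [this] using ht
    have hderiv : HasDerivAt (fun t : ℝ => (2*a*b - 2*d*β) * t + (b^2 - e*β) * t^2)
        (2*a*b - 2*d*β) 0 := by
      have h1 := (hasDerivAt_id (0:ℝ)).const_mul (2*a*b - 2*d*β)
      have h2 := (hasDerivAt_pow 2 (0:ℝ)).const_mul (b^2 - e*β)
      have := h1.add h2
      simp at this
      exact this
    have := hmin.hasDerivAt_eq_zero hderiv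
    linarith
  -- kernel
  have hker : M.mulVec (β • x - a • y) = 0 := by
    funext i
    have hk := key (Pi.single i 1)
    simp only [single_dotProduct, one_mul] at hk
    simp only [Matrix.mulVec_sub, Matrix.mulVec_smul, Pi.sub_apply, Pi.smul_apply,
      Pi.zero_apply, smul_eq_mul]
    linarith
  have hz : β • x - a • y ≠ 0 := by
    intro h
    have hxy : x = (a / β) • y := by
      have : β • x = a • y := by
        have := sub_eq_zero.mp h
        exact this
      funext i
      have := congrFun this i
      simp only [Pi.smul_apply, smul_eq_mul] at this ⊢
      field_simp
      linarith
    rw [linearIndependent_fin2] at hli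
    exact hli.2 (a / β) hxy.symm
  refine ⟨hz, hker, ?_⟩
  rw [← Matrix.exists_mulVec_eq_zero_iff]
  exact ⟨_, hz, hker⟩
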